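/- Boundary inequality for the Stubborn Real Roots Theorem: under the hypotheses that P and Q are real polynomials of degrees n > m, both with all roots real, |P(0)| > |Q(0)|, and the roots ordered by absolute value satisfy |p_j| < |q_j| for j = 1, ..., m, one has |P(iy)| > |Q(iy)| for every real y. In particular P + Q has no roots on the imaginary axis. -/

import Mathlib

open Polynomial Complex

lemma abs_eval_sq (k : ℕ) (R : Polynomial ℝ) (hs : R.Splits)
    (r : Fin k → ℝ) (hr : R.roots = ↑(List.ofFn r)) (y : ℝ) :
    (‖(R.map (algebraMap ℝ ℂ)).eval ((y : ℂ) * Complex.I)‖)^2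
      = R.leadingCoeff^2 * ∏ i, (y^2 + (r i)^2) := by
  have hR := hs.eq_prod_roots
  rw [hr] at hR
  conv_lhs => rw [hR]
  simp only [Polynomial.map_mul, Polynomial.map_C, Polynomial.eval_mul, Polynomial.eval_C,
    Polynomial.map_multiset_prod, Polynomial.eval_multiset_prod, Multiset.map_coe,
    List.map_ofFn, List.prod_ofFn, Multiset.prod_coe, Function.comp,
    Polynomial.map_prod, Polynomial.eval_prod,
    Polynomial.map_sub, Polynomial.map_X, Polynomial.eval_sub, Polynomial.eval_X,
    map_mul, map_prod, norm_mul, norm_prod, mul_pow, ← Finset.prod_pow, Complex.sq_norm]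
  congr 1
  · simp [Complex.normSq_apply]; ring
  · refine Finset.prod_congr rfl fun i _ => ?_
    simp [Complex.normSq_apply]
    ring

set_option linter.unnecessarySeqFocus false in
lemma key_ineq (n m : ℕ) (hnm : m < n) (A B : ℝ) (hA : 0 < A) (hB : 0 < B)
    (a : Fin n → ℝ) (b : Fin m → ℝ) (ha : ∀ i, 0 < a i) (hb : ∀ j, 0 < b j)
    (hab : ∀ j : Fin m, a (Fin.castLE hnm.le j) < b j)
    (h0 : B * ∏ j, b j < A * ∏ i, a i) (t : ℝ) (ht : 0 ≤ t) :
    B * ∏ j, (t + b j) < A * ∏ i, (t + a i) := by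
  classical
  set a' : ℕ → ℝ := fun i => if h : i < n then a ⟨i, h⟩ else 1 with ha'
  set b' : ℕ → ℝ := fun j => if h : j < m then b ⟨j, h⟩ else 1 with hb'
  have ha'pos : ∀ i, 0 < a' i := by
    intro i; by_cases h : i < n <;> simp [ha', h] <;> exact ha _
  have hb'pos : ∀ j, 0 < b' j := by
    intro j; by_cases h : j < m <;> simp [hb', h] <;> exact hb _
  have hab' : ∀ i < m, a' i < b' i := by
    intro i h
    have hin : i < n := h.trans hnm
    have := hab ⟨i, h⟩
    simpa [ha', hb', hin, h, Fin.castLE] using this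
  -- abbreviations
  set Pa := ∏ i ∈ Finset.range m, a' i with hPa
  set Ra := ∏ i ∈ Finset.Ico m n, a' i with hRa
  set Ta := ∏ i ∈ Finset.range m, (t + a' i) with hTa
  set RTa := ∏ i ∈ Finset.Ico m n, (t + a' i) with hRTa
  set Pb := ∏ j ∈ Finset.range m, b' j with hPb
  set Tb := ∏ j ∈ Finset.range m, (t + b' j) with hTb
  have hPaPos : 0 < Pa := Finset.prod_pos fun i _ => ha'pos i
  have hRaPos : 0 < Ra := Finset.prod_pos fun i _ => ha'pos i
  have hTaPos : 0 < Ta := Finset.prod_pos fun i _ => by linarith [ha'pos i]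
  have hRTaPos : 0 < RTa := Finset.prod_pos fun i _ => by linarith [ha'pos i]
  have hPbPos : 0 < Pb := Finset.prod_pos fun j _ => hb'pos j
  have hTbPos : 0 < Tb := Finset.prod_pos fun j _ => by linarith [hb'pos j]
  -- convert Fin products
  have e1 : (∏ i : Fin n, a i) = Pa * Ra := by
    rw [show (∏ i : Fin n, a i) = ∏ i : Fin n, a' i from
        Finset.prod_congr rfl fun i _ => by simp [ha', i.isLt],
      Fin.prod_univ_eq_prod_range a' n, ← Finset.prod_range_mul_prod_Ico a' hnm.le]
  have e2 : (∏ i : Fin n, (t + a i)) = Ta * RTa := by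
    rw [show (∏ i : Fin n, (t + a i)) = ∏ i : Fin n, (fun j => t + a' j) i from
        Finset.prod_congr rfl fun i _ => by simp [ha', i.isLt],
      Fin.prod_univ_eq_prod_range (fun j => t + a' j) n,
      ← Finset.prod_range_mul_prod_Ico (fun j => t + a' j) hnm.le]
  have e3 : (∏ j : Fin m, b j) = Pb := by
    rw [show (∏ j : Fin m, b j) = ∏ j : Fin m, b' j from
        Finset.prod_congr rfl fun j _ => by simp [hb', j.isLt],
      Fin.prod_univ_eq_prod_range b' m]
  have e4 : (∏ j : Fin m, (t + b j)) = Tb := by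
    rw [show (∏ j : Fin m, (t + b j)) = ∏ j : Fin m, (fun i => t + b' i) j from
        Finset.prod_congr rfl fun j _ => by simp [hb', j.isLt],
      Fin.prod_univ_eq_prod_range (fun i => t + b' i) m]
  rw [e1, e3] at h0
  rw [e2, e4]
  -- fact 1 : Ra ≤ RTa
  have f1 : Ra ≤ RTa :=
    Finset.prod_le_prod (fun i _ => (ha'pos i).le) (fun i _ => by linarith)
  -- fact 2 : Pa * Tb <= Pb * Ta
  have f2 : Pa * Tb ≤ Pb * Ta := by
    have h := Finset.prod_le_prod (s := Finset.range m)
      (f := fun i => a' i * (t + b' i)) (g := fun i => b' i * (t + a' i))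
      (fun i _ => by exact le_of_lt (mul_pos (ha'pos i) (by linarith [hb'pos i])))
      (fun i hi => by
        have him := Finset.mem_range.mp hi
        have hlt := hab' i him
        have ht' := mul_nonneg ht (sub_nonneg.mpr hlt.le)
        nlinarith [ha'pos i, hb'pos i])
    simpa [Finset.prod_mul_distrib, hPa, hPb, hTa, hTb] using h
  -- conclude
  rw [← mul_lt_mul_iff_left₀ (mul_pos hPaPos hPbPos)]
  calc B * Tb * (Pa * Pb) = (B * Pb) * (Tb * Pa) := by ring
    _ ≤ (B * Pb) * (Pb * Ta) := by
        apply mul_le_mul_of_nonneg_left _ (le_of_lt (mul_pos hB hPbPos))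
        rw [mul_comm Tb Pa]; exact f2
    _ < (A * (Pa * Ra)) * (Pb * Ta) :=
        mul_lt_mul_of_pos_right h0 (mul_pos hPbPos hTaPos)
    _ ≤ (A * (Pa * RTa)) * (Pb * Ta) := by
        apply mul_le_mul_of_nonneg_right _ (le_of_lt (mul_pos hPbPos hTaPos))
        exact mul_le_mul_of_nonneg_left (mul_le_mul_of_nonneg_left f1 hPaPos.le) hA.le
    _ = A * (Ta * RTa) * (Pa * Pb) := by ring

/-- Boundary inequality for the Stubborn Real Roots Theorem: if `P` and `Q` are real
polynomials of degrees `n > m` with all roots real, `|P(0)| > |Q(0)|`, and the roots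
(with multiplicity) ordered by absolute value satisfy `|p j| < |q j|` for
`j = 1, …, m`, then `|P(iy)| > |Q(iy)|` for every real `y`; in particular `P + Q` has
no roots on the imaginary axis. -/
theorem stubborn_real_roots_boundary (n m : ℕ) (hnm : m < n) (P Q : Polynomial ℝ)
    (hP0 : P ≠ 0) (hQ0 : Q ≠ 0) (hPdeg : P.natDegree = n) (hQdeg : Q.natDegree = m)
    (hPsplit : P.Splits) (hQsplit : Q.Splits)
    (h0 : |Q.eval 0| < |P.eval 0|)
    (p : Fin n → ℝ) (q : Fin m → ℝ)
    (hproots : P.roots = ↑(List.ofFn p)) (hqroots : Q.roots = ↑(List.ofFn q))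
    (hpmono : ∀ i j : Fin n, i ≤ j → |p i| ≤ |p j|)
    (hqmono : ∀ i j : Fin m, i ≤ j → |q i| ≤ |q j|)
    (hlt : ∀ j : Fin m, |p (Fin.castLE hnm.le j)| < |q j|) :
    (∀ y : ℝ,
      ‖(Q.map (algebraMap ℝ ℂ)).eval (y * Complex.I)‖ <
        ‖(P.map (algebraMap ℝ ℂ)).eval (y * Complex.I)‖) ∧
    (∀ y : ℝ, ((P + Q).map (algebraMap ℝ ℂ)).eval (y * Complex.I) ≠ 0) := by
  have hPev := fun y => abs_eval_sq n P hPsplit p hproots y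
  have hQev := fun y => abs_eval_sq m Q hQsplit q hqroots y
  -- eval at 0
  have hval0 : ∀ R : Polynomial ℝ,
      ‖(R.map (algebraMap ℝ ℂ)).eval (((0:ℝ) : ℂ) * Complex.I)‖ = |R.eval 0| := by
    intro R
    have h : (((0:ℝ) : ℂ) * Complex.I) = algebraMap ℝ ℂ 0 := by simp
    rw [h, Polynomial.eval_map, Polynomial.eval₂_at_apply]
    exact (Complex.norm_real _).trans (Real.norm_eq_abs _)
  -- P has no zero root
  have hP0' : P.eval 0 ≠ 0 := by
    intro h
    rw [h, abs_zero] at h0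
    exact (abs_nonneg _).not_gt h0
  have hpne : ∀ i, p i ≠ 0 := by
    intro i hpi
    have hmem : p i ∈ P.roots := by
      rw [hproots, Multiset.mem_coe, List.mem_ofFn]; exact ⟨i, rfl⟩
    have := Polynomial.isRoot_of_mem_roots hmem
    rw [hpi] at this
    exact hP0' this
  have hqne : ∀ j, q j ≠ 0 := by
    intro j hqj
    have := hlt j
    rw [hqj, abs_zero] at this
    exact (abs_nonneg _).not_gt this
  -- leading coefficients
  have hlcP : P.leadingCoeff ≠ 0 := Polynomial.leadingCoeff_ne_zero.mpr hP0
  have hlcQ : Q.leadingCoeff ≠ 0 := Polynomial.leadingCoeff_ne_zero.mpr hQ0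
  -- base inequality at 0 in squared form
  have h0sq : Q.leadingCoeff ^ 2 * ∏ j, (q j) ^ 2 <
      P.leadingCoeff ^ 2 * ∏ i, (p i) ^ 2 := by
    have h := pow_lt_pow_left₀ h0 (abs_nonneg _) (n := 2) (by norm_num)
    rw [← hval0 P, ← hval0 Q, hPev 0, hQev 0] at h
    simpa using h
  -- the main squared inequality for each y
  have main : ∀ y : ℝ,
      (‖(Q.map (algebraMap ℝ ℂ)).eval ((y : ℂ) * Complex.I)‖)^2 <
      (‖(P.map (algebraMap ℝ ℂ)).eval ((y : ℂ) * Complex.I)‖)^2 := by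
    intro y
    rw [hPev y, hQev y]
    exact key_ineq n m hnm (P.leadingCoeff ^ 2) (Q.leadingCoeff ^ 2)
      (pow_two_pos_of_ne_zero hlcP)
      (pow_two_pos_of_ne_zero hlcQ)
      (fun i => (p i) ^ 2) (fun j => (q j) ^ 2)
      (fun i => pow_two_pos_of_ne_zero (hpne i))
      (fun j => pow_two_pos_of_ne_zero (hqne j))
      (fun j => by
        have h := pow_lt_pow_left₀ (hlt j) (abs_nonneg _) (n := 2) (by norm_num)
        simpa [_root_.sq_abs] using h)
      h0sq (y ^ 2) (sq_nonneg y)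
  refine ⟨fun y => ?_, fun y hzero => ?_⟩
  · exact lt_of_pow_lt_pow_left₀ 2 (norm_nonneg _) (main y)
  · have h1 := main y
    rw [Polynomial.map_add, Polynomial.eval_add] at hzero
    have heq : (P.map (algebraMap ℝ ℂ)).eval ((y : ℂ) * Complex.I)
        = -((Q.map (algebraMap ℝ ℂ)).eval ((y : ℂ) * Complex.I)) := by
      linear_combination hzero
    rw [heq, norm_neg] at h1
    exact lt_irrefl _ h1
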